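/- Let κ ∈ ℕⁿ, f ∈ ℂ_κ[z₁,…,zₙ], and W = (W₁,…,Wₙ) ∈ ℂⁿ with Im(Wᵢ) > 0 for all i. Then there exists ε₀ > 0 such that for all 0 < ε < ε₀ the polynomial (z+W)^κ + ε·f(z) is stable, where (z+W)^κ = (z₁+W₁)^{κ₁}⋯(zₙ+Wₙ)^{κₙ}. -/

import Mathlib

open MvPolynomial

lemma im_le_norm_add' (z W : ℂ) (hz : 0 < z.im) (hW : 0 < W.im) :
    W.im ≤ ‖z + W‖ := by
  have h1 : |(z + W).im| ≤ ‖z + W‖ := Complex.abs_im_le_norm _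
  have h2 : (z + W).im = z.im + W.im := by simp
  have : W.im ≤ |(z + W).im| := by rw [h2, abs_of_pos (by linarith)]; linarith
  linarith

lemma norm_le_const_mul_norm_add' (z W : ℂ) (hz : 0 < z.im) (hW : 0 < W.im) :
    ‖z‖ ≤ (2 * max 1 (‖W‖ / W.im)) * ‖z + W‖ := by
  have hb := im_le_norm_add' z W hz hW
  have h1 : (1:ℝ) ≤ max 1 (‖W‖ / W.im) := le_max_left _ _
  have h2 : ‖W‖ / W.im ≤ max 1 (‖W‖ / W.im) := le_max_right _ _
  rcases le_total ‖z‖ (2 * ‖W‖) with h | h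
  · have : ‖W‖ / W.im * W.im = ‖W‖ := div_mul_cancel₀ _ hW.ne'
    nlinarith [norm_nonneg (z + W), hW]
  · have h3 : ‖z‖ ≤ ‖z + W‖ + ‖W‖ := by
      calc ‖z‖ = ‖(z + W) - W‖ := by ring_nf
        _ ≤ ‖z + W‖ + ‖W‖ := norm_sub_le _ _
    nlinarith [norm_nonneg (z + W)]

lemma pow_aux' (b c t s : ℝ) (hb : 0 < b) (hbt : b ≤ t) (hc : 0 ≤ c)
    (hs : 0 ≤ s) (hst : s ≤ c * t) {a k : ℕ} (hak : a ≤ k) :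
    s ^ a ≤ (max c 1) ^ k * (max 1 b⁻¹) ^ k * t ^ k := by
  have ht : 0 < t := hb.trans_le hbt
  have hM1 : (1:ℝ) ≤ max c 1 := le_max_right _ _
  have hM2 : (1:ℝ) ≤ max 1 b⁻¹ := le_max_left _ _
  have hca : c ^ a ≤ (max c 1) ^ k :=
    (pow_le_pow_left₀ hc (le_max_left c 1) a).trans (pow_le_pow_right₀ hM1 hak)
  have hbM : (1:ℝ) ≤ b * max 1 b⁻¹ := by
    calc (1:ℝ) = b * b⁻¹ := (mul_inv_cancel₀ hb.ne').symm
      _ ≤ b * max 1 b⁻¹ := by gcongr; exact le_max_right _ _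
  have hta : t ^ a ≤ (max 1 b⁻¹) ^ k * t ^ k := by
    calc t ^ a = t ^ a * 1 := (mul_one _).symm
      _ ≤ t ^ a * (b * max 1 b⁻¹) ^ (k - a) :=
          mul_le_mul_of_nonneg_left (one_le_pow₀ hbM) (by positivity)
      _ = (t ^ a * b ^ (k - a)) * (max 1 b⁻¹) ^ (k - a) := by rw [mul_pow, ← mul_assoc]
      _ ≤ (t ^ a * t ^ (k - a)) * (max 1 b⁻¹) ^ (k - a) := by
          gcongr
      _ = t ^ k * (max 1 b⁻¹) ^ (k - a) := by rw [← pow_add, Nat.add_sub_cancel' hak]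
      _ ≤ t ^ k * (max 1 b⁻¹) ^ k := by
          exact mul_le_mul_of_nonneg_left (pow_le_pow_right₀ hM2 (Nat.sub_le _ _)) (by positivity)
      _ = (max 1 b⁻¹) ^ k * t ^ k := mul_comm _ _
  calc s ^ a ≤ (c * t) ^ a := pow_le_pow_left₀ hs hst a
    _ = c ^ a * t ^ a := mul_pow c t a
    _ ≤ (max c 1) ^ k * ((max 1 b⁻¹) ^ k * t ^ k) :=
        mul_le_mul hca hta (by positivity) (by positivity)
    _ = (max c 1) ^ k * (max 1 b⁻¹) ^ k * t ^ k := by ring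

/-- A complex polynomial is *stable* if it is non-vanishing whenever all
variables lie in the open upper half-plane. -/
def IsStable {σ : Type*} (f : MvPolynomial σ ℂ) : Prop :=
  ∀ z : σ → ℂ, (∀ i, 0 < (z i).im) → MvPolynomial.eval z f ≠ 0

/-- Let `f` have degree at most `κᵢ` in the variable `zᵢ` and let `W ∈ ℂⁿ` have
all coordinates in the open upper half-plane.  Then for all sufficiently small
`ε > 0` the polynomial `(z+W)^κ + ε·f(z)` is stable. -/
theorem perturbation_of_stable (n : ℕ) (κ : Fin n → ℕ)
    (f : MvPolynomial (Fin n) ℂ) (hf : ∀ i, f.degreeOf i ≤ κ i)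
    (W : Fin n → ℂ) (hW : ∀ i, 0 < (W i).im) :
    ∃ ε₀ : ℝ, 0 < ε₀ ∧ ∀ ε : ℝ, 0 < ε → ε < ε₀ →
      IsStable ((∏ i, (X i + C (W i)) ^ κ i) + (ε : ℂ) • f) := by
  classical
  set M : Fin n → ℝ := fun i =>
    (max (2 * max 1 (‖W i‖ / (W i).im)) 1) ^ κ i * (max 1 ((W i).im)⁻¹) ^ κ i with hM
  set B : ℝ := (∑ α ∈ f.support, ‖f.coeff α‖) * ∏ i, M i with hBdef
  have hB0 : 0 ≤ B := by
    apply mul_nonneg (Finset.sum_nonneg fun _ _ => norm_nonneg _)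
    exact Finset.prod_nonneg fun i _ => by positivity
  refine ⟨(B + 1)⁻¹, by positivity, ?_⟩
  intro ε hε hεB z hz
  have hde : ∀ α ∈ f.support, ∀ i, α i ≤ κ i := by
    intro α hα i
    exact le_trans (MvPolynomial.monomial_le_degreeOf i hα) (hf i)
  set P : ℝ := ∏ i, ‖z i + W i‖ ^ κ i with hPdef
  have hP : 0 < P :=
    Finset.prod_pos fun i _ =>
      pow_pos ((hW i).trans_le (im_le_norm_add' _ _ (hz i) (hW i))) _
  have key : ‖MvPolynomial.eval z f‖ ≤ B * P := by
    rw [MvPolynomial.eval_eq']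
    refine le_trans (norm_sum_le _ _) ?_
    have hterm : ∀ α ∈ f.support,
        ‖f.coeff α * ∏ i, z i ^ α i‖ ≤ ‖f.coeff α‖ * ((∏ i, M i) * P) := by
      intro α hα
      rw [norm_mul, norm_prod]
      refine mul_le_mul_of_nonneg_left ?_ (norm_nonneg _)
      have h1 : ∀ i ∈ Finset.univ, ‖z i ^ α i‖ ≤ M i * ‖z i + W i‖ ^ κ i := by
        intro i _
        rw [norm_pow]
        exact pow_aux' ((W i).im) _ _ _ (hW i) (im_le_norm_add' _ _ (hz i) (hW i))
          (by positivity) (norm_nonneg _)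
          (norm_le_const_mul_norm_add' _ _ (hz i) (hW i)) (hde α hα i)
      calc ∏ i, ‖z i ^ α i‖ ≤ ∏ i, M i * ‖z i + W i‖ ^ κ i :=
            Finset.prod_le_prod (fun i _ => norm_nonneg _) h1
        _ = (∏ i, M i) * P := Finset.prod_mul_distrib
    calc ∑ α ∈ f.support, ‖f.coeff α * ∏ i, z i ^ α i‖
        ≤ ∑ α ∈ f.support, ‖f.coeff α‖ * ((∏ i, M i) * P) := Finset.sum_le_sum hterm
      _ = B * P := by rw [hBdef, ← Finset.sum_mul]; ring
  have hPv : MvPolynomial.eval z (∏ i, (X i + C (W i)) ^ κ i)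
      = ∏ i, (z i + W i) ^ κ i := by simp
  have hPvnorm : ‖∏ i, (z i + W i) ^ κ i‖ = P := by
    rw [norm_prod]; exact Finset.prod_congr rfl fun i _ => norm_pow _ _
  intro h0
  rw [map_add, hPv] at h0
  have hev : MvPolynomial.eval z ((ε : ℂ) • f) = (ε : ℂ) * MvPolynomial.eval z f := by
    exact MvPolynomial.smul_eval z f (ε:ℂ)
  rw [hev] at h0
  have heq : (∏ i, (z i + W i) ^ κ i) = -((ε : ℂ) * MvPolynomial.eval z f) :=
    eq_neg_of_add_eq_zero_left h0
  have hnorm : P = ε * ‖MvPolynomial.eval z f‖ := by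
    rw [← hPvnorm, heq, norm_neg, norm_mul, Complex.norm_real, Real.norm_eq_abs,
      abs_of_pos hε]
  have h2 : ε * ‖MvPolynomial.eval z f‖ ≤ ε * (B * P) :=
    mul_le_mul_of_nonneg_left key hε.le
  have h3 : ε * (B + 1) < 1 := by
    have := mul_lt_mul_of_pos_right hεB (show (0:ℝ) < B + 1 by linarith)
    rwa [inv_mul_cancel₀ (by linarith : B + 1 ≠ 0)] at this
  nlinarith
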